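/- Let f : [0,1] → 2^[0,1] be upper semicontinuous with the intermediate value property. Suppose there exist n ≥ 1 and closed intervals J₁ ⊆ [x,y), J₂ ⊆ [x,y], J₃ ⊆ [y,z] (with x < y < z) such that f^n[J₃] ⊇ J₂, f^n[J₂] ⊇ J₁, f^n[J₁] ⊇ [y,z] ⊇ J₃, and y ∉ J₁. Then f has a periodic cycle whose period s satisfies s | 3n, s ∤ n, and s ∤ 2n; in particular, 3 | s and s is not a power of 2. -/

import Mathlib

open Set Filter Topology

/-- The graph of a set-valued function on `[0,1]`. -/
def GraphSV (f : ℝ → Set ℝ) : Set (ℝ × ℝ) :=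
  {p | p.1 ∈ Icc (0:ℝ) 1 ∧ p.2 ∈ f p.1}

/-- Upper semicontinuous set-valued function `[0,1] → 2^[0,1]`:
nonempty compact values inside `[0,1]` and closed graph. -/
def USC (f : ℝ → Set ℝ) : Prop :=
  (∀ x ∈ Icc (0:ℝ) 1, (f x).Nonempty ∧ f x ⊆ Icc (0:ℝ) 1 ∧ IsCompact (f x)) ∧
    IsClosed (GraphSV f)

/-- The intermediate value property. -/
def IVP (f : ℝ → Set ℝ) : Prop :=
  ∀ x₁ ∈ Icc (0:ℝ) 1, ∀ x₂ ∈ Icc (0:ℝ) 1, x₁ ≠ x₂ →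
    ∀ y₁ ∈ f x₁, ∀ y₂ ∈ f x₂, y₁ ≠ y₂ →
      ∀ y ∈ Ioo (min y₁ y₂) (max y₁ y₂),
        ∃ x ∈ Ioo (min x₁ x₂) (max x₁ x₂), y ∈ f x

/-- The weak intermediate value property. -/
def WIVP (f : ℝ → Set ℝ) : Prop :=
  ∀ x₁ ∈ Icc (0:ℝ) 1, ∀ x₂ ∈ Icc (0:ℝ) 1, x₁ ≠ x₂ →
    ∀ y₁ ∈ f x₁, ∃ y₂ ∈ f x₂,
      ∀ y ∈ Icc (min y₁ y₂) (max y₁ y₂),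
        ∃ x ∈ Icc (min x₁ x₂) (max x₁ x₂), y ∈ f x

/-- Weak continuity (from the left and the right) at each interior point. -/
def WeakCont (f : ℝ → Set ℝ) : Prop :=
  ∀ x ∈ Ioo (0:ℝ) 1, ∀ y ∈ f x,
    (∃ u : ℕ → ℝ × ℝ, (∀ k, u k ∈ GraphSV f ∧ (u k).1 < x) ∧
      Tendsto u atTop (𝓝 (x, y))) ∧
    (∃ u : ℕ → ℝ × ℝ, (∀ k, u k ∈ GraphSV f ∧ x < (u k).1) ∧
      Tendsto u atTop (𝓝 (x, y)))

/-- `f` is almost nonfissile: the nonfissile points of the graph are dense in the graph. -/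
def AlmostNonfissile (f : ℝ → Set ℝ) : Prop :=
  GraphSV f ⊆ closure {p | p ∈ GraphSV f ∧ f p.1 = {p.2}}

/-- `f` is light: each fiber `{x : y ∈ f x}` has empty interior in `[0,1]`. -/
def Light (f : ℝ → Set ℝ) : Prop :=
  ∀ y : ℝ, ∀ U : Set ℝ, IsOpen U → (U ∩ Icc (0:ℝ) 1).Nonempty →
    ∃ x ∈ U ∩ Icc (0:ℝ) 1, y ∉ f x

/-- `f` is surjective onto `[0,1]`. -/
def Surj (f : ℝ → Set ℝ) : Prop :=
  ∀ y ∈ Icc (0:ℝ) 1, ∃ x ∈ Icc (0:ℝ) 1, y ∈ f x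

/-- The `n`-fold set-valued composition of `f`. -/
def fIter (f : ℝ → Set ℝ) : ℕ → ℝ → Set ℝ
  | 0, x => {x}
  | n + 1, x => ⋃ z ∈ fIter f n x, f z

/-- The image `f^n[A] = ⋃_{a ∈ A} f^n(a)`. -/
def imIter (f : ℝ → Set ℝ) (n : ℕ) (A : Set ℝ) : Set ℝ :=
  ⋃ a ∈ A, fIter f n a

/-- The inverse limit of the single bonding function `f` on `[0,1]`. -/
def InvLim (f : ℝ → Set ℝ) : Set (ℕ → ℝ) :=
  {z | (∀ i, z i ∈ Icc (0:ℝ) 1) ∧ ∀ i, z i ∈ f (z (i + 1))}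

/-- `X` is irreducible between `x` and `y`: the only subcontinuum of `X`
containing both is `X` itself. -/
def IrreducibleBetween (X : Set (ℕ → ℝ)) (x y : ℕ → ℝ) : Prop :=
  x ∈ X ∧ y ∈ X ∧
    ∀ K ⊆ X, IsCompact K → IsConnected K → x ∈ K → y ∈ K → K = X

namespace Stmt16Aux

variable {f : ℝ → Set ℝ}

lemma graph_subset (hf : USC f) : GraphSV f ⊆ Icc (0:ℝ) 1 ×ˢ Icc (0:ℝ) 1 := by
  rintro ⟨u, w⟩ ⟨h1, h2⟩
  exact ⟨h1, (hf.1 u h1).2.1 h2⟩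

lemma graph_compact (hf : USC f) : IsCompact (GraphSV f) :=
  (isCompact_Icc.prod isCompact_Icc).of_isClosed_subset hf.2 (graph_subset hf)

lemma fIter_subset (hf : USC f) : ∀ n, ∀ x ∈ Icc (0:ℝ) 1, fIter f n x ⊆ Icc (0:ℝ) 1 := by
  intro n
  induction n with
  | zero => intro x hx w hw; simp only [fIter, mem_singleton_iff] at hw; exact hw ▸ hx
  | succ n ih =>
    intro x hx w hw
    simp only [fIter, mem_iUnion, exists_prop] at hw
    obtain ⟨z, hz, hw⟩ := hw
    exact (hf.1 z (ih x hx hz)).2.1 hw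

lemma fIter_nonempty (hf : USC f) : ∀ n, ∀ x ∈ Icc (0:ℝ) 1, (fIter f n x).Nonempty := by
  intro n
  induction n with
  | zero => intro x _; exact ⟨x, rfl⟩
  | succ n ih =>
    intro x hx
    obtain ⟨z, hz⟩ := ih x hx
    obtain ⟨w, hw⟩ := (hf.1 z (fIter_subset hf n x hx hz)).1
    exact ⟨w, by simp only [fIter, mem_iUnion, exists_prop]; exact ⟨z, hz, hw⟩⟩

def GraphN (f : ℝ → Set ℝ) (n : ℕ) : Set (ℝ × ℝ) :=
  {p | p.1 ∈ Icc (0:ℝ) 1 ∧ p.2 ∈ fIter f n p.1}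

lemma graphN_compact (hf : USC f) : ∀ n, IsCompact (GraphN f n) := by
  intro n
  induction n with
  | zero =>
    have he : GraphN f 0 = (fun x : ℝ => (x, x)) '' Icc 0 1 := by
      ext ⟨a, b⟩
      simp only [GraphN, fIter, mem_singleton_iff, mem_setOf_eq, mem_image, Prod.mk.injEq]
      constructor
      · rintro ⟨ha, rfl⟩; exact ⟨_, ha, rfl, rfl⟩
      · rintro ⟨t, ht, rfl, rfl⟩; exact ⟨ht, rfl⟩
    rw [he]
    exact isCompact_Icc.image (continuous_id.prodMk continuous_id)
  | succ n ih =>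
    have h2 : IsCompact ((GraphN f n ×ˢ GraphSV f) ∩ {q : (ℝ×ℝ)×(ℝ×ℝ) | q.1.2 = q.2.1}) :=
      (ih.prod (graph_compact hf)).inter_right
        (isClosed_eq (continuous_snd.comp continuous_fst) (continuous_fst.comp continuous_snd))
    have h3 : IsCompact ((fun q : (ℝ×ℝ)×(ℝ×ℝ) => (q.1.1, q.2.2)) ''
        ((GraphN f n ×ˢ GraphSV f) ∩ {q | q.1.2 = q.2.1})) :=
      h2.image ((continuous_fst.comp continuous_fst).prodMk (continuous_snd.comp continuous_snd))
    have he : GraphN f (n+1) = (fun q : (ℝ×ℝ)×(ℝ×ℝ) => (q.1.1, q.2.2)) ''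
        ((GraphN f n ×ˢ GraphSV f) ∩ {q | q.1.2 = q.2.1}) := by
      ext ⟨t, w⟩
      simp only [GraphN, mem_setOf_eq, mem_image, mem_inter_iff, mem_prod, Prod.mk.injEq]
      constructor
      · rintro ⟨ht, hw⟩
        simp only [fIter, mem_iUnion, exists_prop] at hw
        obtain ⟨z, hz, hw⟩ := hw
        exact ⟨((t, z), (z, w)), ⟨⟨⟨ht, hz⟩, ⟨fIter_subset hf n t ht hz, hw⟩⟩, rfl⟩, rfl, rfl⟩
      · rintro ⟨⟨⟨p1, p2⟩, ⟨q1, q2⟩⟩, ⟨⟨⟨ht, hz⟩, ⟨hzI, hw⟩⟩, heq⟩, rfl, rfl⟩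
        simp only at heq
        subst heq
        refine ⟨ht, ?_⟩
        simp only [fIter, mem_iUnion, exists_prop]
        exact ⟨p2, hz, hw⟩
    rw [he]; exact h3


lemma f_between (hivp : IVP f) {u v : ℝ} (hu : u ∈ Icc (0:ℝ) 1) (hv : v ∈ Icc (0:ℝ) 1)
    (huv : u ≠ v) {y₁ y₂ y : ℝ} (hy₁ : y₁ ∈ f u) (hy₂ : y₂ ∈ f v)
    (hy : y ∈ Icc (min y₁ y₂) (max y₁ y₂)) :
    ∃ x ∈ Icc (min u v) (max u v), y ∈ f x := by
  by_cases h1 : y = y₁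
  · exact ⟨u, ⟨min_le_left u v, le_max_left u v⟩, h1 ▸ hy₁⟩
  by_cases h2 : y = y₂
  · exact ⟨v, ⟨min_le_right u v, le_max_right u v⟩, h2 ▸ hy₂⟩
  have hne : y₁ ≠ y₂ := by
    rintro rfl
    simp only [min_self, max_self, Icc_self, mem_singleton_iff] at hy
    exact h1 hy
  have hyo : y ∈ Ioo (min y₁ y₂) (max y₁ y₂) := by
    constructor
    · rcases hy.1.lt_or_eq with h | h
      · exact h
      · exfalso; rcases min_cases y₁ y₂ with ⟨hm, _⟩ | ⟨hm, _⟩ <;> rw [hm] at h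
        · exact h1 h.symm
        · exact h2 h.symm
    · rcases hy.2.lt_or_eq with h | h
      · exact h
      · exfalso; rcases max_cases y₁ y₂ with ⟨hm, _⟩ | ⟨hm, _⟩ <;> rw [hm] at h
        · exact h1 h
        · exact h2 h
  obtain ⟨x, hx, hyx⟩ := hivp u hu v hv huv y₁ hy₁ y₂ hy₂ hne y hyo
  exact ⟨x, Ioo_subset_Icc_self hx, hyx⟩

lemma f_between' (hf : USC f) (hivp : IVP f) {u x₂ : ℝ} (hu : u ∈ Icc (0:ℝ) 1)
    (hx₂ : x₂ ∈ Icc (0:ℝ) 1) (hne : x₂ ≠ u) {y₁ y₂ y : ℝ} (hy₁ : y₁ ∈ f u) (hy₂ : y₂ ∈ f u)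
    (hy : y ∈ Icc (min y₁ y₂) (max y₁ y₂)) :
    ∃ x ∈ Icc (min u x₂) (max u x₂), y ∈ f x := by
  obtain ⟨y', hy'⟩ := (hf.1 x₂ hx₂).1
  have hmin : min y₁ y₂ ∈ f u := by
    rcases min_cases y₁ y₂ with ⟨h, _⟩ | ⟨h, _⟩ <;> rw [h] <;> assumption
  have hmax : max y₁ y₂ ∈ f u := by
    rcases max_cases y₁ y₂ with ⟨h, _⟩ | ⟨h, _⟩ <;> rw [h] <;> assumption
  rcases le_total y y' with h | h
  · refine f_between hivp hu hx₂ (Ne.symm hne) hmin hy' ?_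
    exact ⟨(min_le_left _ _).trans hy.1, h.trans (le_max_right _ _)⟩
  · refine f_between hivp hu hx₂ (Ne.symm hne) hmax hy' ?_
    exact ⟨(min_le_right _ _).trans h, hy.2.trans (le_max_left _ _)⟩

lemma f_convex (hf : USC f) (hivp : IVP f) {u : ℝ} (hu : u ∈ Icc (0:ℝ) 1)
    {y₁ y₂ : ℝ} (hy₁ : y₁ ∈ f u) (hy₂ : y₂ ∈ f u) :
    Icc (min y₁ y₂) (max y₁ y₂) ⊆ f u := by
  intro y hy
  have key : ∀ ε : ℝ, 0 < ε → ∃ x ∈ Icc (0:ℝ) 1, |x - u| < ε ∧ y ∈ f x := by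
    intro ε hε
    set δ : ℝ := min (ε/2) (1/2) with hδdef
    have hδ : 0 < δ := lt_min (by linarith) (by norm_num)
    have hδ2 : δ ≤ 1/2 := min_le_right _ _
    have hδε : δ < ε := (min_le_left _ _).trans_lt (by linarith)
    rcases le_total u (1/2) with hu2 | hu2
    · -- x₂ := u + δ
      have hx₂I : u + δ ∈ Icc (0:ℝ) 1 := ⟨by linarith [hu.1], by linarith⟩
      obtain ⟨x, hx, hyx⟩ := f_between' hf hivp hu hx₂I (by linarith) hy₁ hy₂ hy
      rw [min_eq_left (by linarith), max_eq_right (by linarith)] at hx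
      refine ⟨x, ⟨hu.1.trans hx.1, hx.2.trans hx₂I.2⟩, ?_, hyx⟩
      rw [abs_lt]; constructor <;> [linarith [hx.1]; linarith [hx.2]]
    · have hx₂I : u - δ ∈ Icc (0:ℝ) 1 := ⟨by linarith, by linarith [hu.2]⟩
      obtain ⟨x, hx, hyx⟩ := f_between' hf hivp hu hx₂I (by linarith) hy₁ hy₂ hy
      rw [min_eq_right (by linarith), max_eq_left (by linarith)] at hx
      refine ⟨x, ⟨hx₂I.1.trans hx.1, hx.2.trans hu.2⟩, ?_, hyx⟩
      rw [abs_lt]; constructor <;> [linarith [hx.1]; linarith [hx.2]]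
  have hcl : (u, y) ∈ closure (GraphSV f) := by
    rw [Metric.mem_closure_iff]
    intro ε hε
    obtain ⟨x, hxI, hxu, hyx⟩ := key ε hε
    refine ⟨(x, y), ⟨hxI, hyx⟩, ?_⟩
    rw [Prod.dist_eq]
    simp only [dist_self, Real.dist_eq]
    rw [max_eq_left (abs_nonneg _)]
    rwa [abs_sub_comm]
  rw [hf.2.closure_eq] at hcl
  exact hcl.2

def Mp (g : ℝ → Set ℝ) : Prop :=
  ∀ e₁ e₂ : ℝ, e₁ < e₂ → Icc e₁ e₂ ⊆ Icc (0:ℝ) 1 →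
    ∀ u ∈ Icc e₁ e₂, ∀ v ∈ Icc e₁ e₂, ∀ y₁ ∈ g u, ∀ y₂ ∈ g v,
      ∀ y ∈ Icc (min y₁ y₂) (max y₁ y₂), ∃ x ∈ Icc e₁ e₂, y ∈ g x

def Cv (g : ℝ → Set ℝ) : Prop :=
  ∀ u ∈ Icc (0:ℝ) 1, ∀ y₁ ∈ g u, ∀ y₂ ∈ g u, Icc (min y₁ y₂) (max y₁ y₂) ⊆ g u

lemma mp_f (hf : USC f) (hivp : IVP f) : Mp f := by
  intro e₁ e₂ he hEI u hu v hv y₁ hy₁ y₂ hy₂ y hy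
  by_cases huv : u = v
  · subst huv
    set x₂ : ℝ := if u = e₁ then e₂ else e₁ with hx₂def
    have hx₂E : x₂ ∈ Icc e₁ e₂ := by
      by_cases h : u = e₁ <;> simp only [hx₂def, h, if_true, if_false] <;>
        first
          | exact ⟨le_of_lt he, le_rfl⟩
          | simp [he.le]
    have hx₂ne : x₂ ≠ u := by
      by_cases h : u = e₁ <;> simp only [hx₂def, h, if_true, if_false]
      · exact fun hc => absurd (h ▸ hc) he.ne'
      · exact fun hc => h hc.symm
    obtain ⟨x, hx, hyx⟩ := f_between' hf hivp (hEI hu) (hEI hx₂E) hx₂ne hy₁ hy₂ hy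
    refine ⟨x, ?_, hyx⟩
    exact ⟨le_trans (le_min hu.1 hx₂E.1) hx.1, le_trans hx.2 (max_le hu.2 hx₂E.2)⟩
  · obtain ⟨x, hx, hyx⟩ := f_between hivp (hEI hu) (hEI hv) huv hy₁ hy₂ hy
    refine ⟨x, ?_, hyx⟩
    exact ⟨le_trans (le_min hu.1 hv.1) hx.1, le_trans hx.2 (max_le hu.2 hv.2)⟩

lemma cv_f (hf : USC f) (hivp : IVP f) : Cv f :=
  fun u hu y₁ hy₁ y₂ hy₂ => f_convex hf hivp hu hy₁ hy₂

lemma cv_fIter (hf : USC f) (hivp : IVP f) : ∀ n, Cv (fIter f n) := by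
  intro n
  induction n with
  | zero =>
    intro u _ y₁ hy₁ y₂ hy₂
    simp only [fIter, mem_singleton_iff] at hy₁ hy₂
    subst hy₁; subst hy₂
    intro w hw
    simp only [min_self, max_self, Icc_self, mem_singleton_iff] at hw
    simp [fIter, hw]
  | succ n ih =>
    intro u hu y₁ hy₁ y₂ hy₂ w hw
    simp only [fIter, mem_iUnion, exists_prop] at hy₁ hy₂ ⊢
    obtain ⟨z₁, hz₁, hy₁⟩ := hy₁
    obtain ⟨z₂, hz₂, hy₂⟩ := hy₂
    have hz₁I := fIter_subset hf n u hu hz₁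
    have hz₂I := fIter_subset hf n u hu hz₂
    by_cases hzz : z₁ = z₂
    · subst hzz
      exact ⟨z₁, hz₁, f_convex hf hivp hz₁I hy₁ hy₂ hw⟩
    · obtain ⟨ζ, hζ, hwζ⟩ := f_between hivp hz₁I hz₂I hzz hy₁ hy₂ hw
      exact ⟨ζ, ih u hu z₁ hz₁ z₂ hz₂ hζ, hwζ⟩

lemma mp_fIter (hf : USC f) (hivp : IVP f) : ∀ n, Mp (fIter f n) := by
  intro n
  induction n with
  | zero =>
    intro e₁ e₂ he hEI u hu v hv y₁ hy₁ y₂ hy₂ y hy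
    simp only [fIter, mem_singleton_iff] at hy₁ hy₂
    subst hy₁; subst hy₂
    exact ⟨y, ⟨le_trans (le_min hu.1 hv.1) hy.1, le_trans hy.2 (max_le hu.2 hv.2)⟩, rfl⟩
  | succ n ih =>
    intro e₁ e₂ he hEI u hu v hv y₁ hy₁ y₂ hy₂ y hy
    simp only [fIter, mem_iUnion, exists_prop] at hy₁ hy₂
    obtain ⟨z₁, hz₁, hy₁⟩ := hy₁
    obtain ⟨z₂, hz₂, hy₂⟩ := hy₂
    have hz₁I := fIter_subset hf n u (hEI hu) hz₁
    have hz₂I := fIter_subset hf n v (hEI hv) hz₂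
    by_cases hzz : z₁ = z₂
    · subst hzz
      have : y ∈ f z₁ := f_convex hf hivp hz₁I hy₁ hy₂ hy
      exact ⟨u, hu, by simp only [fIter, mem_iUnion, exists_prop]; exact ⟨z₁, hz₁, this⟩⟩
    · obtain ⟨ζ, hζ, hyζ⟩ := f_between hivp hz₁I hz₂I hzz hy₁ hy₂ hy
      obtain ⟨x, hx, hζx⟩ := ih e₁ e₂ he hEI u hu v hv z₁ hz₁ z₂ hz₂ ζ hζ
      exact ⟨x, hx, by simp only [fIter, mem_iUnion, exists_prop]; exact ⟨ζ, hζx, hyζ⟩⟩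


lemma cover_aux (hf : USC f) (hivp : IVP f) (n : ℕ) {j₁ j₂ c d p q u v : ℝ}
    (hJI : Icc j₁ j₂ ⊆ Icc (0:ℝ) 1) (hcd : c < d) (huv : u ≤ v)
    (hu : u ∈ Icc j₁ j₂) (hv : v ∈ Icc j₁ j₂)
    (hp : p ∈ fIter f n u) (hq : q ∈ fIter f n v)
    (hpq : (p = c ∧ q = d) ∨ (p = d ∧ q = c)) :
    ∃ α β, α ≤ β ∧ Icc α β ⊆ Icc j₁ j₂ ∧
      (∀ w ∈ Icc c d, ∃ t ∈ Icc α β, w ∈ fIter f n t) ∧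
      (∀ t ∈ Icc α β, (fIter f n t ∩ Icc c d).Nonempty) := by
  set g := fIter f n with hg
  have huvJ : Icc u v ⊆ Icc j₁ j₂ := Icc_subset_Icc hu.1 hv.2
  have huvI : Icc u v ⊆ Icc (0:ℝ) 1 := huvJ.trans hJI
  -- the set where q is attained
  set Sq : Set ℝ := Icc u v ∩ (fun t => (t, q)) ⁻¹' GraphN f n with hSq
  have hSqc : IsClosed Sq :=
    isClosed_Icc.inter ((graphN_compact hf n).isClosed.preimage
      (continuous_id.prodMk continuous_const))
  have hSqne : Sq.Nonempty := ⟨v, ⟨huv, le_rfl⟩, huvI ⟨huv, le_rfl⟩, hq⟩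
  have hSqbb : BddBelow Sq := (bddBelow_Icc).mono (inter_subset_left)
  set β := sInf Sq with hβdef
  have hβ : β ∈ Sq := hSqc.csInf_mem hSqne hSqbb
  have hqβ : q ∈ g β := hβ.2.2
  have hβuv : β ∈ Icc u v := hβ.1
  -- the set where p is attained, before β
  set Sp : Set ℝ := Icc u β ∩ (fun t => (t, p)) ⁻¹' GraphN f n with hSp
  have hSpc : IsClosed Sp :=
    isClosed_Icc.inter ((graphN_compact hf n).isClosed.preimage
      (continuous_id.prodMk continuous_const))
  have hSpne : Sp.Nonempty := ⟨u, ⟨le_rfl, hβuv.1⟩, huvI ⟨le_rfl, huv⟩, hp⟩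
  have hSpba : BddAbove Sp := (bddAbove_Icc).mono (inter_subset_left)
  set α := sSup Sp with hαdef
  have hα : α ∈ Sp := hSpc.csSup_mem hSpne hSpba
  have hpα : p ∈ g α := hα.2.2
  have hαuβ : α ∈ Icc u β := hα.1
  have hαβ : α ≤ β := hαuβ.2
  have hαβJ : Icc α β ⊆ Icc j₁ j₂ := (Icc_subset_Icc hαuβ.1 hβuv.2).trans huvJ
  have hαβI : Icc α β ⊆ Icc (0:ℝ) 1 := hαβJ.trans hJI
  have hminpq : min p q = c := by
    rcases hpq with ⟨h1, h2⟩ | ⟨h1, h2⟩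
    · subst h1; subst h2; exact min_eq_left hcd.le
    · subst h1; subst h2; exact min_eq_right hcd.le
  have hmaxpq : max p q = d := by
    rcases hpq with ⟨h1, h2⟩ | ⟨h1, h2⟩
    · subst h1; subst h2; exact max_eq_right hcd.le
    · subst h1; subst h2; exact max_eq_left hcd.le
  refine ⟨α, β, hαβ, hαβJ, ?_, ?_⟩
  · -- covering
    intro w hw
    have hw' : w ∈ Icc (min p q) (max p q) := by rw [hminpq, hmaxpq]; exact hw
    rcases eq_or_lt_of_le hαβ with heq | hlt
    · refine ⟨α, ⟨le_rfl, hαβ⟩, ?_⟩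
      have hqα : q ∈ g α := heq ▸ hqβ
      exact cv_fIter hf hivp n α (hαβI ⟨le_rfl, hαβ⟩) p hpα q hqα hw'
    · obtain ⟨t, ht, hwt⟩ := mp_fIter hf hivp n α β hlt hαβI α ⟨le_rfl, hαβ⟩ β ⟨hαβ, le_rfl⟩
        p hpα q hqβ w hw'
      exact ⟨t, ht, hwt⟩
  · -- nonempty intersection
    intro t ht
    by_contra hcon
    rw [not_nonempty_iff_eq_empty] at hcon
    have hcI : c ∈ Icc c d := ⟨le_rfl, hcd.le⟩
    have hdI : d ∈ Icc c d := ⟨hcd.le, le_rfl⟩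
    have hpcd : p ∈ Icc c d := by rcases hpq with ⟨h1, _⟩ | ⟨h1, _⟩ <;> subst h1 <;> assumption
    have hqcd : q ∈ Icc c d := by rcases hpq with ⟨_, h2⟩ | ⟨_, h2⟩ <;> subst h2 <;> assumption
    have hwne : (g t).Nonempty := fIter_nonempty hf n t (hαβI ht)
    obtain ⟨w, hw⟩ := hwne
    have hwcd : w ∉ Icc c d := fun hwc => (eq_empty_iff_forall_notMem.mp hcon) w ⟨hw, hwc⟩
    have htne_α : t ≠ α := by
      rintro rfl; exact (eq_empty_iff_forall_notMem.mp hcon) p ⟨hpα, hpcd⟩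
    have htne_β : t ≠ β := by
      rintro rfl; exact (eq_empty_iff_forall_notMem.mp hcon) q ⟨hqβ, hqcd⟩
    have hαt : α < t := lt_of_le_of_ne ht.1 (Ne.symm htne_α)
    have htβ : t < β := lt_of_le_of_ne ht.2 htne_β
    have hIcc1 : Icc t β ⊆ Icc (0:ℝ) 1 := (Icc_subset_Icc hαt.le le_rfl).trans hαβI
    have hIcc2 : Icc α t ⊆ Icc (0:ℝ) 1 := (Icc_subset_Icc le_rfl htβ.le).trans hαβI
    rcases lt_or_ge w c with hwc | hwc
    · rcases hpq with ⟨hp1, hq1⟩ | ⟨hp1, hq1⟩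
      · -- p = c, q = d : find c on (t, β], contradict maximality of α
        obtain ⟨x, hx, hcx⟩ := mp_fIter hf hivp n t β htβ hIcc1 t ⟨le_rfl, htβ.le⟩
          β ⟨htβ.le, le_rfl⟩ w hw q hqβ c
          (by rw [hq1, min_eq_left (by linarith), max_eq_right (by linarith)]
              exact ⟨hwc.le, hcd.le⟩)
        have hxSp : x ∈ Sp := ⟨⟨hαuβ.1.trans (hαt.le.trans hx.1), hx.2⟩,
          hIcc1 hx, by rw [hp1]; exact hcx⟩
        have := le_csSup hSpba hxSp
        linarith [hx.1]
      · -- p = d, q = c : find c on [α, t), contradict minimality of β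
        obtain ⟨x, hx, hcx⟩ := mp_fIter hf hivp n α t hαt hIcc2 α ⟨le_rfl, hαt.le⟩
          t ⟨hαt.le, le_rfl⟩ p hpα w hw c
          (by rw [hp1, min_eq_right (by linarith), max_eq_left (by linarith)]
              exact ⟨hwc.le, hcd.le⟩)
        have hxSq : x ∈ Sq := ⟨⟨hαuβ.1.trans hx.1, (hx.2.trans htβ.le).trans hβuv.2⟩,
          hIcc2 hx, by rw [hq1]; exact hcx⟩
        have := csInf_le hSqbb hxSq
        linarith [hx.2]
    · have hdw : d < w := lt_of_not_ge fun h => hwcd ⟨hwc, h⟩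
      rcases hpq with ⟨hp1, hq1⟩ | ⟨hp1, hq1⟩
      · -- p = c, q = d : find d on [α, t), contradict minimality of β
        obtain ⟨x, hx, hcx⟩ := mp_fIter hf hivp n α t hαt hIcc2 α ⟨le_rfl, hαt.le⟩
          t ⟨hαt.le, le_rfl⟩ p hpα w hw d
          (by rw [hp1, min_eq_left (by linarith), max_eq_right (by linarith)]
              exact ⟨hcd.le, hdw.le⟩)
        have hxSq : x ∈ Sq := ⟨⟨hαuβ.1.trans hx.1, (hx.2.trans htβ.le).trans hβuv.2⟩,
          hIcc2 hx, by rw [hq1]; exact hcx⟩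
        have := csInf_le hSqbb hxSq
        linarith [hx.2]
      · -- p = d, q = c : find d on (t, β], contradict maximality of α
        obtain ⟨x, hx, hcx⟩ := mp_fIter hf hivp n t β htβ hIcc1 t ⟨le_rfl, htβ.le⟩
          β ⟨htβ.le, le_rfl⟩ w hw q hqβ d
          (by rw [hq1, min_eq_right (by linarith), max_eq_left (by linarith)]
              exact ⟨hcd.le, hdw.le⟩)
        have hxSp : x ∈ Sp := ⟨⟨hαuβ.1.trans (hαt.le.trans hx.1), hx.2⟩,
          hIcc1 hx, by rw [hp1]; exact hcx⟩
        have := le_csSup hSpba hxSp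
        linarith [hx.1]


lemma cover (hf : USC f) (hivp : IVP f) (n : ℕ) {j₁ j₂ c d : ℝ}
    (hj : j₁ ≤ j₂) (hJI : Icc j₁ j₂ ⊆ Icc (0:ℝ) 1) (hcd : c ≤ d)
    (hcov : Icc c d ⊆ imIter f n (Icc j₁ j₂)) :
    ∃ α β, α ≤ β ∧ Icc α β ⊆ Icc j₁ j₂ ∧
      (∀ w ∈ Icc c d, ∃ t ∈ Icc α β, w ∈ fIter f n t) ∧
      (∀ t ∈ Icc α β, (fIter f n t ∩ Icc c d).Nonempty) := by
  have hc : c ∈ imIter f n (Icc j₁ j₂) := hcov ⟨le_rfl, hcd⟩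
  have hd : d ∈ imIter f n (Icc j₁ j₂) := hcov ⟨hcd, le_rfl⟩
  simp only [imIter, mem_iUnion, exists_prop] at hc hd
  obtain ⟨u, hu, hcu⟩ := hc
  obtain ⟨v, hv, hdv⟩ := hd
  rcases eq_or_lt_of_le hcd with rfl | hcd'
  · refine ⟨u, u, le_rfl, Icc_subset_Icc hu.1 hu.2, ?_, ?_⟩
    · intro w hw
      have : w = c := le_antisymm hw.2 hw.1
      exact ⟨u, ⟨le_rfl, le_rfl⟩, this ▸ hcu⟩
    · intro t ht
      have : t = u := le_antisymm (ht.2) (ht.1)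
      exact ⟨c, this ▸ hcu, le_rfl, le_rfl⟩
  · rcases le_total u v with huv | hvu
    · exact cover_aux hf hivp n hJI hcd' huv hu hv hcu hdv (Or.inl ⟨rfl, rfl⟩)
    · exact cover_aux hf hivp n hJI hcd' hvu hv hu hdv hcu (Or.inr ⟨rfl, rfl⟩)


lemma image_convex (hf : USC f) (hivp : IVP f) (n : ℕ) {S : Set ℝ} (hS : S ⊆ Icc (0:ℝ) 1)
    (hSc : ∀ s₁ ∈ S, ∀ s₂ ∈ S, Icc (min s₁ s₂) (max s₁ s₂) ⊆ S) :
    ∀ w₁ ∈ {w | ∃ s ∈ S, w ∈ fIter f n s}, ∀ w₂ ∈ {w | ∃ s ∈ S, w ∈ fIter f n s},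
      Icc (min w₁ w₂) (max w₁ w₂) ⊆ {w | ∃ s ∈ S, w ∈ fIter f n s} := by
  rintro w₁ ⟨s₁, hs₁, hw₁⟩ w₂ ⟨s₂, hs₂, hw₂⟩ w hw
  by_cases hss : s₁ = s₂
  · subst hss
    exact ⟨s₁, hs₁, cv_fIter hf hivp n s₁ (hS hs₁) w₁ hw₁ w₂ hw₂ hw⟩
  · have hmm : min s₁ s₂ < max s₁ s₂ := min_lt_max.mpr hss
    have hsubS : Icc (min s₁ s₂) (max s₁ s₂) ⊆ S := hSc s₁ hs₁ s₂ hs₂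
    obtain ⟨x, hx, hwx⟩ := mp_fIter hf hivp n _ _ hmm (hsubS.trans hS)
      s₁ ⟨min_le_left _ _, le_max_left _ _⟩ s₂ ⟨min_le_right _ _, le_max_right _ _⟩
      w₁ hw₁ w₂ hw₂ w hw
    exact ⟨x, hsubS hx, hwx⟩

lemma cycle_exists (hf : USC f) (hivp : IVP f) (n : ℕ)
    {α₃ β₃ α₂ β₂ a₁ b₁ : ℝ}
    (h3 : α₃ ≤ β₃)
    (hI3 : Icc α₃ β₃ ⊆ Icc (0:ℝ) 1) (hI2 : Icc α₂ β₂ ⊆ Icc (0:ℝ) 1)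
    (hI1 : Icc a₁ b₁ ⊆ Icc (0:ℝ) 1)
    (hne32 : ∀ t ∈ Icc α₃ β₃, (fIter f n t ∩ Icc α₂ β₂).Nonempty)
    (hne21 : ∀ t ∈ Icc α₂ β₂, (fIter f n t ∩ Icc a₁ b₁).Nonempty)
    (hsurj : ∀ w ∈ Icc α₃ β₃, ∃ t ∈ Icc α₃ β₃, ∃ s₁ ∈ fIter f n t ∩ Icc α₂ β₂,
        ∃ s₂ ∈ fIter f n s₁ ∩ Icc a₁ b₁, w ∈ fIter f n s₂) :
    ∃ t ∈ Icc α₃ β₃, ∃ s₁ ∈ fIter f n t ∩ Icc α₂ β₂,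
        ∃ s₂ ∈ fIter f n s₁ ∩ Icc a₁ b₁, t ∈ fIter f n s₂ := by
  classical
  set G := GraphN f n with hG
  set C : Set ((ℝ×ℝ)×(ℝ×ℝ)×(ℝ×ℝ)) :=
    (G ×ˢ G ×ˢ G) ∩ {z | z.1.1 ∈ Icc α₃ β₃ ∧ z.1.2 = z.2.1.1 ∧ z.1.2 ∈ Icc α₂ β₂ ∧
      z.2.1.2 = z.2.2.1 ∧ z.2.1.2 ∈ Icc a₁ b₁} with hCdef
  have hCcpt : IsCompact C := by
    refine ((graphN_compact hf n).prod
      ((graphN_compact hf n).prod (graphN_compact hf n))).inter_right ?_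
    simp only [setOf_and]
    refine IsClosed.inter ?_ (IsClosed.inter ?_ (IsClosed.inter ?_ (IsClosed.inter ?_ ?_)))
    · exact isClosed_Icc.preimage (by fun_prop)
    · exact isClosed_eq (by fun_prop) (by fun_prop)
    · exact isClosed_Icc.preimage (by fun_prop)
    · exact isClosed_eq (by fun_prop) (by fun_prop)
    · exact isClosed_Icc.preimage (by fun_prop)
  set π : (ℝ×ℝ)×(ℝ×ℝ)×(ℝ×ℝ) → ℝ×ℝ := fun z => (z.1.1, z.2.2.2) with hπdef
  set GH : Set (ℝ×ℝ) := π '' C with hGHdef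
  have hGHcpt : IsCompact GH := hCcpt.image (by fun_prop)
  have hmem : ∀ t w : ℝ, (t, w) ∈ GH ↔ (t ∈ Icc α₃ β₃ ∧ ∃ s₁, (s₁ ∈ fIter f n t ∧ s₁ ∈ Icc α₂ β₂) ∧
      ∃ s₂, (s₂ ∈ fIter f n s₁ ∧ s₂ ∈ Icc a₁ b₁) ∧ w ∈ fIter f n s₂) := by
    intro t w
    constructor
    · rintro ⟨⟨⟨t', s₁⟩, ⟨s₁', s₂⟩, ⟨s₂', w'⟩⟩, ⟨⟨hG1, hG2, hG3⟩, hm3, he1, hm2, he2, hm1⟩, hπeq⟩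
      simp only [hπdef, Prod.mk.injEq] at hπeq he1 he2 hm3 hm2 hm1
      obtain ⟨rfl, rfl⟩ := hπeq
      subst he1; subst he2
      exact ⟨hm3, s₁, ⟨hG1.2, hm2⟩, s₂, ⟨hG2.2, hm1⟩, hG3.2⟩
    · rintro ⟨hm3, s₁, ⟨hs₁f, hs₁m⟩, s₂, ⟨hs₂f, hs₂m⟩, hwf⟩
      refine ⟨((t, s₁), (s₁, s₂), (s₂, w)), ⟨⟨⟨hI3 hm3, hs₁f⟩, ⟨hI2 hs₁m, hs₂f⟩,
        ⟨hI1 hs₂m, hwf⟩⟩, hm3, rfl, hs₁m, rfl, hs₂m⟩, rfl⟩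
  -- the two half-graphs
  set A : Set ℝ := Prod.fst '' (GH ∩ {p : ℝ×ℝ | p.2 ≤ p.1}) with hAdef
  set B : Set ℝ := Prod.fst '' (GH ∩ {p : ℝ×ℝ | p.1 ≤ p.2}) with hBdef
  have hAcl : IsClosed A :=
    ((hGHcpt.inter_right (isClosed_le continuous_snd continuous_fst)).image continuous_fst).isClosed
  have hBcl : IsClosed B :=
    ((hGHcpt.inter_right (isClosed_le continuous_fst continuous_snd)).image continuous_fst).isClosed
  have hcover : Icc α₃ β₃ ⊆ A ∪ B := by
    intro t ht
    obtain ⟨s₁, hs₁f, hs₁m⟩ := hne32 t ht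
    obtain ⟨s₂, hs₂f, hs₂m⟩ := hne21 s₁ hs₁m
    obtain ⟨w, hw⟩ := fIter_nonempty hf n s₂ (hI1 hs₂m)
    have hGHm : (t, w) ∈ GH := (hmem t w).mpr ⟨ht, s₁, ⟨hs₁f, hs₁m⟩, s₂, ⟨hs₂f, hs₂m⟩, hw⟩
    rcases le_total w t with h | h
    · exact Or.inl ⟨(t, w), ⟨hGHm, h⟩, rfl⟩
    · exact Or.inr ⟨(t, w), ⟨hGHm, h⟩, rfl⟩
  have hAne : (Icc α₃ β₃ ∩ A).Nonempty := by
    obtain ⟨t, ht, s₁, hs₁, s₂, hs₂, hwf⟩ := hsurj α₃ ⟨le_rfl, h3⟩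
    have : (t, α₃) ∈ GH := (hmem t α₃).mpr ⟨ht, s₁, ⟨hs₁.1, hs₁.2⟩, s₂, ⟨hs₂.1, hs₂.2⟩, hwf⟩
    exact ⟨t, ht, (t, α₃), ⟨this, ht.1⟩, rfl⟩
  have hBne : (Icc α₃ β₃ ∩ B).Nonempty := by
    obtain ⟨t, ht, s₁, hs₁, s₂, hs₂, hwf⟩ := hsurj β₃ ⟨h3, le_rfl⟩
    have : (t, β₃) ∈ GH := (hmem t β₃).mpr ⟨ht, s₁, ⟨hs₁.1, hs₁.2⟩, s₂, ⟨hs₂.1, hs₂.2⟩, hwf⟩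
    exact ⟨t, ht, (t, β₃), ⟨this, ht.2⟩, rfl⟩
  obtain ⟨t, htI, htA, htB⟩ := isPreconnected_closed_iff.mp isPreconnected_Icc A B hAcl hBcl
    hcover hAne hBne
  obtain ⟨⟨t₁, w₁⟩, ⟨hGH1, hle1⟩, heq1⟩ := htA
  obtain ⟨⟨t₂, w₂⟩, ⟨hGH2, hle2⟩, heq2⟩ := htB
  simp only at heq1 heq2 hle1 hle2
  rw [heq1] at hGH1 hle1
  rw [heq2] at hGH2 hle2
  -- convexity of the section over t
  set S₁ : Set ℝ := fIter f n t ∩ Icc α₂ β₂ with hS₁def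
  have hS₁sub : S₁ ⊆ Icc (0:ℝ) 1 := fun s hs => hI2 hs.2
  have hS₁c : ∀ s₁ ∈ S₁, ∀ s₂ ∈ S₁, Icc (min s₁ s₂) (max s₁ s₂) ⊆ S₁ := by
    intro s₁ hs₁ s₂ hs₂ s hs
    exact ⟨cv_fIter hf hivp n t (hI3 htI) s₁ hs₁.1 s₂ hs₂.1 hs,
      ⟨le_trans (le_min hs₁.2.1 hs₂.2.1) hs.1, le_trans hs.2 (max_le hs₁.2.2 hs₂.2.2)⟩⟩
  set S₂ : Set ℝ := {s | ∃ s' ∈ S₁, s ∈ fIter f n s'} ∩ Icc a₁ b₁ with hS₂def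
  have hS₂sub : S₂ ⊆ Icc (0:ℝ) 1 := fun s hs => hI1 hs.2
  have hS₂c : ∀ s₁ ∈ S₂, ∀ s₂ ∈ S₂, Icc (min s₁ s₂) (max s₁ s₂) ⊆ S₂ := by
    intro s₁ hs₁ s₂ hs₂ s hs
    exact ⟨image_convex hf hivp n hS₁sub hS₁c s₁ hs₁.1 s₂ hs₂.1 hs,
      ⟨le_trans (le_min hs₁.2.1 hs₂.2.1) hs.1, le_trans hs.2 (max_le hs₁.2.2 hs₂.2.2)⟩⟩
  set T : Set ℝ := {w | ∃ s ∈ S₂, w ∈ fIter f n s} with hTdef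
  have hTmem : ∀ w, w ∈ T ↔ (t, w) ∈ GH := by
    intro w
    rw [hmem t w]
    constructor
    · rintro ⟨s₂, ⟨⟨s₁, hs₁, hs₂f⟩, hs₂m⟩, hwf⟩
      exact ⟨htI, s₁, ⟨hs₁.1, hs₁.2⟩, s₂, ⟨hs₂f, hs₂m⟩, hwf⟩
    · rintro ⟨_, s₁, ⟨hs₁f, hs₁m⟩, s₂, ⟨hs₂f, hs₂m⟩, hwf⟩
      exact ⟨s₂, ⟨⟨s₁, ⟨hs₁f, hs₁m⟩, hs₂f⟩, hs₂m⟩, hwf⟩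
  have htT : t ∈ T := by
    have hw₁T : w₁ ∈ T := (hTmem w₁).mpr hGH1
    have hw₂T : w₂ ∈ T := (hTmem w₂).mpr hGH2
    exact image_convex hf hivp n hS₂sub hS₂c w₁ hw₁T w₂ hw₂T
      ⟨le_trans (min_le_left _ _) hle1, le_trans hle2 (le_max_right _ _)⟩
  obtain ⟨s₂, ⟨⟨s₁, hs₁, hs₂f⟩, hs₂m⟩, htf⟩ := htT
  exact ⟨t, htI, s₁, ⟨hs₁.1, hs₁.2⟩, s₂, ⟨hs₂f, hs₂m⟩, htf⟩


lemma fIter_chain : ∀ (n : ℕ) (x w : ℝ), w ∈ fIter f n x →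
    ∃ c : ℕ → ℝ, c 0 = x ∧ c n = w ∧ ∀ i < n, c (i+1) ∈ f (c i) := by
  intro n
  induction n with
  | zero =>
    intro x w hw
    simp only [fIter, mem_singleton_iff] at hw
    exact ⟨fun _ => x, rfl, hw.symm, fun i hi => absurd hi (Nat.not_lt_zero i)⟩
  | succ n ih =>
    intro x w hw
    simp only [fIter, mem_iUnion, exists_prop] at hw
    obtain ⟨z, hz, hw⟩ := hw
    obtain ⟨c, hc0, hcn, hstep⟩ := ih x z hz
    refine ⟨fun i => if i ≤ n then c i else w, ?_, ?_, ?_⟩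
    · simp only [Nat.zero_le, if_pos]; exact hc0
    · simp only [Nat.lt_irrefl, Nat.not_succ_le_self, if_neg, if_false]
    · intro i hi
      by_cases h : i < n
      · have h1 : i ≤ n := h.le
        have h2 : i + 1 ≤ n := h
        simp only [if_pos h1, if_pos h2]
        exact hstep i h
      · have he : i = n := by omega
        subst he
        simp only [le_rfl, if_pos, Nat.not_succ_le_self, if_neg, if_false]
        rw [hcn]
        exact hw

lemma periodic_nat_mul {q : ℕ → ℝ} {c : ℕ} (h : Function.Periodic q c) :
    ∀ k, Function.Periodic q (k * c) := by
  intro k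
  induction k with
  | zero => intro x; simp
  | succ k ih =>
    intro x
    have h1 : x + (k + 1) * c = x + k * c + c := by ring
    rw [h1, h (x + k * c), ih x]

lemma periodic_gcd {q : ℕ → ℝ} : ∀ a b : ℕ, Function.Periodic q a → Function.Periodic q b →
    Function.Periodic q (Nat.gcd a b) := by
  intro a
  induction a using Nat.strong_induction_on with
  | _ a ih =>
    intro b ha hb
    rcases Nat.eq_zero_or_pos a with rfl | hpos
    · simpa using hb
    · rw [Nat.gcd_rec]
      refine ih (b % a) (Nat.mod_lt b hpos) a ?_ ha
      intro x
      have h1 := periodic_nat_mul ha (b / a) (x + b % a)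
      have h2 : x + b % a + b / a * a = x + b := by
        rw [Nat.add_assoc, Nat.mod_add_div' b a]
      rw [h2] at h1
      rw [← h1, hb x]

end Stmt16Aux

/-- the covering pattern `J₃ → J₂ → J₁ → [y,z] ⊇ J₃` under `f^n`
yields a periodic cycle whose period `s` satisfies `s ∣ 3n`, `s ∤ n`, `s ∤ 2n`;
in particular `3 ∣ s` and `s` is not a power of `2`. -/
theorem stmt16 (f : ℝ → Set ℝ) (hf : USC f) (hivp : IVP f)
    (n : ℕ) (hn : 0 < n) (x y z : ℝ) (hxy : x < y) (hyz : y < z)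
    (hx : x ∈ Icc (0:ℝ) 1) (hz : z ∈ Icc (0:ℝ) 1)
    (a₁ b₁ a₂ b₂ a₃ b₃ : ℝ) (h₁ : a₁ ≤ b₁) (h₂ : a₂ ≤ b₂) (h₃ : a₃ ≤ b₃)
    (hJ1 : Icc a₁ b₁ ⊆ Ico x y) (hJ2 : Icc a₂ b₂ ⊆ Icc x y)
    (hJ3 : Icc a₃ b₃ ⊆ Icc y z)
    (hc1 : Icc a₂ b₂ ⊆ imIter f n (Icc a₃ b₃))
    (hc2 : Icc a₁ b₁ ⊆ imIter f n (Icc a₂ b₂))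
    (hc3 : Icc y z ⊆ imIter f n (Icc a₁ b₁))
    (hyJ1 : y ∉ Icc a₁ b₁) :
    ∃ (q : ℕ → ℝ) (s : ℕ), 0 < s ∧ (∀ i, q (i + 1) ∈ f (q i)) ∧
      Function.Periodic q s ∧ (∀ m, 0 < m → Function.Periodic q m → s ≤ m) ∧
      s ∣ 3 * n ∧ ¬ s ∣ n ∧ ¬ s ∣ 2 * n ∧ 3 ∣ s ∧ ∀ a : ℕ, s ≠ 2 ^ a := by
  classical
  have hyI : y ∈ Icc (0:ℝ) 1 := ⟨hx.1.trans hxy.le, hyz.le.trans hz.2⟩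
  have hyzI : Icc y z ⊆ Icc (0:ℝ) 1 := Icc_subset_Icc hyI.1 hz.2
  have hJ3I : Icc a₃ b₃ ⊆ Icc (0:ℝ) 1 := hJ3.trans hyzI
  have hxyI : Icc x y ⊆ Icc (0:ℝ) 1 := Icc_subset_Icc hx.1 hyI.2
  have hJ2I : Icc a₂ b₂ ⊆ Icc (0:ℝ) 1 := hJ2.trans hxyI
  have hJ1I : Icc a₁ b₁ ⊆ Icc (0:ℝ) 1 := fun t ht => hxyI (Ico_subset_Icc_self (hJ1 ht))
  -- shrink J₂ to I₂ = [α₂,β₂] whose image still covers J₁, with fibers meeting J₁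
  obtain ⟨α₂, β₂, h2le, hI2J2, hI2cov, hI2ne⟩ := Stmt16Aux.cover hf hivp n h₂ hJ2I h₁ hc2
  -- shrink J₃ to I₃ = [α₃,β₃] whose image still covers I₂, with fibers meeting I₂
  have hI2cov' : Icc α₂ β₂ ⊆ imIter f n (Icc a₃ b₃) := fun s hs => hc1 (hI2J2 hs)
  obtain ⟨α₃, β₃, h3le, hI3J3, hI3cov, hI3ne⟩ := Stmt16Aux.cover hf hivp n h₃ hJ3I h2le hI2cov'
  have hI3I : Icc α₃ β₃ ⊆ Icc (0:ℝ) 1 := hI3J3.trans hJ3I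
  have hI2I : Icc α₂ β₂ ⊆ Icc (0:ℝ) 1 := hI2J2.trans hJ2I
  have hsurj : ∀ w ∈ Icc α₃ β₃, ∃ t ∈ Icc α₃ β₃, ∃ s₁ ∈ fIter f n t ∩ Icc α₂ β₂,
      ∃ s₂ ∈ fIter f n s₁ ∩ Icc a₁ b₁, w ∈ fIter f n s₂ := by
    intro w hw
    have hwyz : w ∈ Icc y z := hJ3 (hI3J3 hw)
    have h := hc3 hwyz
    simp only [imIter, mem_iUnion, exists_prop] at h
    obtain ⟨s₂, hs₂J1, hwf⟩ := h
    obtain ⟨s₁, hs₁I2, hs₂f⟩ := hI2cov s₂ hs₂J1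
    obtain ⟨t, htI3, hs₁f⟩ := hI3cov s₁ hs₁I2
    exact ⟨t, htI3, s₁, ⟨hs₁f, hs₁I2⟩, s₂, ⟨hs₂f, hs₂J1⟩, hwf⟩
  obtain ⟨t, htI3, s₁, hs₁, s₂, hs₂, htf⟩ :=
    Stmt16Aux.cycle_exists hf hivp n h3le hI3I hI2I hJ1I hI3ne hI2ne hsurj
  -- extract finite f-chains
  obtain ⟨c₁, hc₁0, hc₁n, hc₁s⟩ := Stmt16Aux.fIter_chain n t s₁ hs₁.1
  obtain ⟨c₂, hc₂0, hc₂n, hc₂s⟩ := Stmt16Aux.fIter_chain n s₁ s₂ hs₂.1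
  obtain ⟨c₃, hc₃0, hc₃n, hc₃s⟩ := Stmt16Aux.fIter_chain n s₂ t htf
  set r : ℕ → ℝ := fun i => if i < n then c₁ i else if i < 2*n then c₂ (i - n)
    else if i < 3*n then c₃ (i - 2*n) else t with hrdef
  have hr1 : ∀ i, i < n → r i = c₁ i := by
    intro i hi; simp only [hrdef]; rw [if_pos hi]
  have hr2 : ∀ i, n ≤ i → i < 2*n → r i = c₂ (i - n) := by
    intro i h1 h2; simp only [hrdef]; rw [if_neg (by omega), if_pos h2]
  have hr3 : ∀ i, 2*n ≤ i → i < 3*n → r i = c₃ (i - 2*n) := by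
    intro i h1 h2; simp only [hrdef]; rw [if_neg (by omega), if_neg (by omega), if_pos h2]
  have hr4 : ∀ i, 3*n ≤ i → r i = t := by
    intro i h1; simp only [hrdef]; rw [if_neg (by omega), if_neg (by omega), if_neg (by omega)]
  have hr0 : r 0 = t := by rw [hr1 0 hn, hc₁0]
  have hrn : r n = s₁ := by rw [hr2 n le_rfl (by omega), Nat.sub_self, hc₂0]
  have hr2n : r (2*n) = s₂ := by rw [hr3 (2*n) le_rfl (by omega), Nat.sub_self, hc₃0]
  have hr3n : r (3*n) = t := hr4 (3*n) le_rfl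
  have hstep : ∀ j, j < 3*n → r (j+1) ∈ f (r j) := by
    intro j hj
    by_cases h1 : j + 1 < n
    · rw [hr1 (j+1) h1, hr1 j (by omega)]
      exact hc₁s j (by omega)
    by_cases h2 : j + 1 = n
    · have e1 : r (j+1) = s₁ := by rw [h2]; exact hrn
      rw [e1, hr1 j (by omega), ← hc₁n, ← h2]
      exact hc₁s j (by omega)
    by_cases h3 : j + 1 < 2*n
    · rw [hr2 (j+1) (by omega) h3, hr2 j (by omega) (by omega),
        show j + 1 - n = (j - n) + 1 from by omega]
      exact hc₂s (j - n) (by omega)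
    by_cases h4 : j + 1 = 2*n
    · have e1 : r (j+1) = s₂ := by rw [h4]; exact hr2n
      have hx := hc₂s (j - n) (by omega)
      rw [show (j - n) + 1 = n from by omega, hc₂n] at hx
      rw [e1, hr2 j (by omega) (by omega)]
      exact hx
    by_cases h5 : j + 1 < 3*n
    · rw [hr3 (j+1) (by omega) h5, hr3 j (by omega) (by omega),
        show j + 1 - 2*n = (j - 2*n) + 1 from by omega]
      exact hc₃s (j - 2*n) (by omega)
    · have h6 : j + 1 = 3*n := by omega
      have e1 : r (j+1) = t := by rw [h6]; exact hr3n
      have hx := hc₃s (j - 2*n) (by omega)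
      rw [show (j - 2*n) + 1 = n from by omega, hc₃n] at hx
      rw [e1, hr3 j (by omega) (by omega)]
      exact hx
  have h3npos : 0 < 3*n := by omega
  set q : ℕ → ℝ := fun i => r (i % (3*n)) with hqdef
  have hq : ∀ i, q (i + 1) ∈ f (q i) := by
    intro i
    have hj : i % (3*n) < 3*n := Nat.mod_lt _ h3npos
    have hkey : q (i+1) = r (i % (3*n) + 1) := by
      simp only [hqdef]
      rw [Nat.add_mod i 1 (3*n), Nat.mod_eq_of_lt (show 1 < 3*n by omega)]
      rcases eq_or_lt_of_le (Nat.succ_le_of_lt hj) with he | hl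
      · have he' : i % (3*n) + 1 = 3*n := he
        rw [he', Nat.mod_self, hr0, hr3n]
      · rw [Nat.mod_eq_of_lt hl]
    rw [hkey]
    exact hstep (i % (3*n)) hj
  have hper : Function.Periodic q (3*n) := by
    intro i; simp only [hqdef]; rw [Nat.add_mod_right]
  have hq0 : q 0 = t := by simp only [hqdef]; rw [Nat.zero_mod, hr0]
  have hq2n : q (2*n) = s₂ := by
    simp only [hqdef]; rw [Nat.mod_eq_of_lt (by omega), hr2n]
  have hq0ne : q 0 ≠ q (2*n) := by
    rw [hq0, hq2n]
    have hty : y ≤ t := (hJ3 (hI3J3 htI3)).1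
    have hs₂y : s₂ < y := (hJ1 hs₂.2).2
    intro hcon
    rw [← hcon] at hs₂y
    exact absurd hty (not_le.mpr hs₂y)
  have hex : ∃ s : ℕ, 0 < s ∧ Function.Periodic q s := ⟨3*n, h3npos, hper⟩
  set s : ℕ := Nat.find hex with hsdef
  have hspec : 0 < s ∧ Function.Periodic q s := Nat.find_spec hex
  have hmin : ∀ m, 0 < m → Function.Periodic q m → s ≤ m :=
    fun m hm hp => Nat.find_min' hex ⟨hm, hp⟩
  have hdvd : s ∣ 3*n := by
    have hg := Stmt16Aux.periodic_gcd s (3*n) hspec.2 hper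
    have hgpos : 0 < Nat.gcd s (3*n) := Nat.gcd_pos_of_pos_left _ hspec.1
    have h1 : s ≤ Nat.gcd s (3*n) := hmin _ hgpos hg
    have h2 : Nat.gcd s (3*n) = s :=
      le_antisymm (Nat.le_of_dvd hspec.1 (Nat.gcd_dvd_left _ _)) h1
    rw [← h2]
    exact Nat.gcd_dvd_right _ _
  have hnd2 : ¬ s ∣ 2*n := by
    rintro ⟨k, hk⟩
    have hp2 : Function.Periodic q (2*n) := by
      rw [hk, mul_comm]
      exact Stmt16Aux.periodic_nat_mul hspec.2 k
    have := hp2 0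
    rw [Nat.zero_add] at this
    exact hq0ne this.symm
  have hndn : ¬ s ∣ n := fun h => hnd2 (Dvd.dvd.mul_left h 2)
  have h3s : 3 ∣ s := by
    by_contra h3s
    have hcop : Nat.Coprime 3 s :=
      (Nat.Prime.coprime_iff_not_dvd (by norm_num)).mpr h3s
    exact hndn (Nat.Coprime.dvd_of_dvd_mul_left hcop.symm hdvd)
  have hpow : ∀ a : ℕ, s ≠ 2^a := by
    intro a ha
    have h1 : (3:ℕ) ∣ 2^a := ha ▸ h3s
    have h2 : (3:ℕ) ∣ 2 := Nat.Prime.dvd_of_dvd_pow (by norm_num) h1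
    norm_num at h2
  exact ⟨q, s, hspec.1, hq, hspec.2, hmin, hdvd, hndn, hnd2, h3s, hpow⟩
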